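/- arXiv:2410.22617 — 2 statements merged into one kernel-verified Lean document; each statement's English description precedes it below -/
import Mathlib

section
/- Let Δ₁ and Δ₂ be positive definite real k×k matrices, and for a positive definite Δ let f_Δ : ℝ^k → ℝ be the centered Gaussian density f_Δ(x) = (2π)^{-k/2} (det Δ)^{-1/2} exp(−xᵀ Δ⁻¹ x / 2). Then the Hellinger affinity satisfies ∫_{ℝ^k} √(f_{Δ₁}(x) f_{Δ₂}(x)) dx = (det Δ₁)^{1/4} (det Δ₂)^{1/4} / (det((Δ₁ + Δ₂)/2))^{1/2}; equivalently, the Rényi divergence −log ∫ √(f_{Δ₁} f_{Δ₂}) equals (1/2) log det((Δ₁+Δ₂)/2) − (1/4) log det Δ₁ − (1/4) log det Δ₂. -/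
open MeasureTheory

open Real Matrix


lemma int_std (k : ℕ) :
    ∫ x : Fin k → ℝ, Real.exp (-(dotProduct x x) / 2) = (2 * Real.pi) ^ ((k:ℝ)/2) := by
  have h1 : ∀ x : Fin k → ℝ, Real.exp (-(dotProduct x x) / 2)
      = ∏ i, Real.exp (-(1/2) * (x i)^2) := by
    intro x
    rw [← Real.exp_sum, dotProduct]
    congr 1
    rw [← neg_div, ← Finset.sum_neg_distrib, Finset.sum_div]
    exact Finset.sum_congr rfl fun i _ => by ring
  simp_rw [h1]
  erw [MeasureTheory.integral_fintype_prod_eq_pow (ι := Fin k) (μ := volume) (fun t => Real.exp (-(1/2) * t^2))]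
  have := integral_gaussian (1/2)
  simp_rw [neg_mul] at this ⊢
  rw [this]
  have h2 : Real.sqrt (π / (1/2)) = (2 * π) ^ ((1:ℝ)/2) := by
    rw [show π / (1/2) = 2 * π by ring, Real.sqrt_eq_rpow]
  rw [Fintype.card_fin, h2, ← Real.rpow_natCast ((2*π) ^ ((1:ℝ)/2)) k,
    ← Real.rpow_mul (by positivity)]
  congr 1
  ring

lemma posdef_smul {k : ℕ} {M : Matrix (Fin k) (Fin k) ℝ} (hM : M.PosDef)
    {c : ℝ} (hc : 0 < c) : (c • M).PosDef := by
  exact hM.smul hc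

open scoped MatrixOrder in
lemma gauss_int {k : ℕ} (M : Matrix (Fin k) (Fin k) ℝ) (hM : M.PosDef) :
    ∫ x : Fin k → ℝ, Real.exp (-(dotProduct x (M.mulVec x)) / 2)
      = (2 * Real.pi) ^ ((k:ℝ)/2) * M.det ^ (-(1:ℝ)/2) := by
  set A := CFC.sqrt M with hA
  have hAA : A * A = M := CFC.sqrt_mul_sqrt_self M (Matrix.nonneg_iff_posSemidef.mpr hM.posSemidef)
  have hAsymm : Aᵀ = A := (Matrix.nonneg_iff_posSemidef.mp (CFC.sqrt_nonneg M)).isHermitian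
  have hdet : A.det * A.det = M.det := by rw [← Matrix.det_mul, hAA]
  have hMdet : 0 < M.det := hM.det_pos
  have hAdet : A.det ≠ 0 := by
    intro h; rw [h, mul_zero] at hdet; exact hMdet.ne (hdet)
  have habs : |A.det| = M.det ^ ((1:ℝ)/2) := by
    rw [← Real.sqrt_eq_rpow, ← hdet, ← sq, Real.sqrt_sq_eq_abs]
  -- rewrite quadratic form
  have hq : ∀ x : Fin k → ℝ, dotProduct x (M.mulVec x)
      = dotProduct (A.mulVec x) (A.mulVec x) := by
    intro x
    rw [← hAA, ← Matrix.mulVec_mulVec, Matrix.dotProduct_mulVec, ← Matrix.mulVec_transpose, hAsymm]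
  -- change of variables
  set T : (Fin k → ℝ) →ₗ[ℝ] (Fin k → ℝ) := Matrix.toLin' A with hT
  have hTdet : LinearMap.det T = A.det := LinearMap.det_toLin' A
  have hTcont : Continuous T := LinearMap.continuous_on_pi T
  have hmap : Measure.map T volume = ENNReal.ofReal |A.det|⁻¹ • volume := by
    rw [Real.map_linearMap_volume_pi_eq_smul_volume_pi (by rw [hTdet]; exact hAdet), hTdet,
      abs_inv]
  have gcont : Continuous fun y : Fin k → ℝ => Real.exp (-(dotProduct y y) / 2) := by
    continuity
  have key : ∫ x : Fin k → ℝ, Real.exp (-(dotProduct x (M.mulVec x)) / 2)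
      = |A.det|⁻¹ * ∫ y : Fin k → ℝ, Real.exp (-(dotProduct y y) / 2) := by
    have h1 : ∀ x : Fin k → ℝ, Real.exp (-(dotProduct x (M.mulVec x)) / 2)
        = Real.exp (-(dotProduct (T x) (T x)) / 2) := by
      intro x; rw [hq x]; simp [hT, Matrix.toLin'_apply]
    simp_rw [h1]
    rw [← MeasureTheory.integral_map hTcont.aemeasurable
      (gcont.aestronglyMeasurable), hmap, MeasureTheory.integral_smul_measure,
      ENNReal.toReal_ofReal (by positivity), smul_eq_mul]
  rw [key, int_std k, habs]
  rw [← Real.rpow_neg hMdet.le, mul_comm]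
  norm_num



/-- The centered `k`-variate Gaussian density with covariance matrix `Δ`:
`f_Δ(x) = (2π)^{-k/2} (det Δ)^{-1/2} exp(−xᵀ Δ⁻¹ x / 2)`. -/
noncomputable def gaussDensity {k : ℕ} (Δ : Matrix (Fin k) (Fin k) ℝ) (x : Fin k → ℝ) : ℝ :=
  (2 * Real.pi) ^ (-(k : ℝ) / 2) * Δ.det ^ (-(1 : ℝ) / 2) *
    Real.exp (-(dotProduct x (Δ⁻¹.mulVec x)) / 2)

/-- Hellinger affinity of two centered Gaussians:
`∫ √(f_{Δ₁} f_{Δ₂}) = (det Δ₁)^{1/4} (det Δ₂)^{1/4} / (det((Δ₁+Δ₂)/2))^{1/2}`;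
equivalently, the Rényi divergence `−log ∫ √(f_{Δ₁} f_{Δ₂})` equals
`(1/2) log det((Δ₁+Δ₂)/2) − (1/4) log det Δ₁ − (1/4) log det Δ₂`. -/
theorem stmt15 (k : ℕ) (Δ₁ Δ₂ : Matrix (Fin k) (Fin k) ℝ)
    (h1 : Δ₁.PosDef) (h2 : Δ₂.PosDef) :
    (∫ x : Fin k → ℝ, Real.sqrt (gaussDensity Δ₁ x * gaussDensity Δ₂ x)) =
      Δ₁.det ^ ((1 : ℝ) / 4) * Δ₂.det ^ ((1 : ℝ) / 4) /
        (((2 : ℝ)⁻¹ • (Δ₁ + Δ₂)).det) ^ ((1 : ℝ) / 2) ∧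
    -Real.log (∫ x : Fin k → ℝ, Real.sqrt (gaussDensity Δ₁ x * gaussDensity Δ₂ x)) =
      (1 / 2) * Real.log (((2 : ℝ)⁻¹ • (Δ₁ + Δ₂)).det) -
        (1 / 4) * Real.log Δ₁.det - (1 / 4) * Real.log Δ₂.det := by
  have hd1 : (0:ℝ) < Δ₁.det := h1.det_pos
  have hd2 : (0:ℝ) < Δ₂.det := h2.det_pos
  set M : Matrix (Fin k) (Fin k) ℝ := (2:ℝ)⁻¹ • (Δ₁⁻¹ + Δ₂⁻¹) with hMdef
  have hMpd : M.PosDef := posdef_smul (h1.inv.add h2.inv) (by norm_num)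
  have hMdet : (0:ℝ) < M.det := hMpd.det_pos
  have htp : (0:ℝ) < 2 * Real.pi := by positivity
  set C : ℝ := (2 * Real.pi) ^ (-(k:ℝ)/2) * Δ₁.det ^ (-(1:ℝ)/4) * Δ₂.det ^ (-(1:ℝ)/4) with hC
  have hCpos : 0 < C := by positivity
  -- the pointwise identity
  have hpt : ∀ x : Fin k → ℝ, Real.sqrt (gaussDensity Δ₁ x * gaussDensity Δ₂ x)
      = C * Real.exp (-(dotProduct x (M.mulVec x)) / 2) := by
    intro x
    have hq : dotProduct x (M.mulVec x)
        = (dotProduct x (Δ₁⁻¹.mulVec x) + dotProduct x (Δ₂⁻¹.mulVec x)) / 2 := by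
      rw [hMdef, Matrix.smul_mulVec, dotProduct_smul, Matrix.add_mulVec,
        dotProduct_add, smul_eq_mul]
      ring
    have hsq : gaussDensity Δ₁ x * gaussDensity Δ₂ x
        = (C * Real.exp (-(dotProduct x (M.mulVec x)) / 2))^2 := by
      unfold gaussDensity
      have e1 : ((2 * Real.pi) ^ (-(k:ℝ)/2)) * ((2 * Real.pi) ^ (-(k:ℝ)/2))
          = ((2 * Real.pi) ^ (-(k:ℝ)/2))^2 := (sq _).symm
      have e2 : Δ₁.det ^ (-(1:ℝ)/4) * Δ₁.det ^ (-(1:ℝ)/4) = Δ₁.det ^ (-(1:ℝ)/2) := by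
        rw [← Real.rpow_add hd1]; norm_num
      have e3 : Δ₂.det ^ (-(1:ℝ)/4) * Δ₂.det ^ (-(1:ℝ)/4) = Δ₂.det ^ (-(1:ℝ)/2) := by
        rw [← Real.rpow_add hd2]; norm_num
      have e4 : Real.exp (-(dotProduct x (M.mulVec x)) / 2)
            * Real.exp (-(dotProduct x (M.mulVec x)) / 2)
          = Real.exp (-(dotProduct x (Δ₁⁻¹.mulVec x)) / 2)
            * Real.exp (-(dotProduct x (Δ₂⁻¹.mulVec x)) / 2) := by
        rw [← Real.exp_add, ← Real.exp_add]
        congr 1; rw [hq]; ring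
      calc (2 * Real.pi) ^ (-(k:ℝ)/2) * Δ₁.det ^ (-(1:ℝ)/2)
            * Real.exp (-(dotProduct x (Δ₁⁻¹.mulVec x)) / 2)
            * ((2 * Real.pi) ^ (-(k:ℝ)/2) * Δ₂.det ^ (-(1:ℝ)/2)
            * Real.exp (-(dotProduct x (Δ₂⁻¹.mulVec x)) / 2))
          = ((2 * Real.pi) ^ (-(k:ℝ)/2) * (2 * Real.pi) ^ (-(k:ℝ)/2))
            * Δ₁.det ^ (-(1:ℝ)/2) * Δ₂.det ^ (-(1:ℝ)/2)
            * (Real.exp (-(dotProduct x (Δ₁⁻¹.mulVec x)) / 2)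
              * Real.exp (-(dotProduct x (Δ₂⁻¹.mulVec x)) / 2)) := by ring
        _ = ((2 * Real.pi) ^ (-(k:ℝ)/2) * (2 * Real.pi) ^ (-(k:ℝ)/2))
            * (Δ₁.det ^ (-(1:ℝ)/4) * Δ₁.det ^ (-(1:ℝ)/4))
            * (Δ₂.det ^ (-(1:ℝ)/4) * Δ₂.det ^ (-(1:ℝ)/4))
            * (Real.exp (-(dotProduct x (M.mulVec x)) / 2)
              * Real.exp (-(dotProduct x (M.mulVec x)) / 2)) := by
            rw [e2, e3, e4]
        _ = (C * Real.exp (-(dotProduct x (M.mulVec x)) / 2))^2 := by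
            rw [hC]; ring
    rw [hsq, Real.sqrt_sq (by positivity)]
  -- determinant identity
  have hu1 : IsUnit Δ₁.det := hd1.ne'.isUnit
  have hu2 : IsUnit Δ₂.det := hd2.ne'.isUnit
  have hmul : Δ₁ * M * Δ₂ = (2:ℝ)⁻¹ • (Δ₁ + Δ₂) := by
    rw [hMdef, Matrix.mul_smul, Matrix.smul_mul]
    congr 1
    rw [Matrix.mul_add, Matrix.mul_nonsing_inv _ hu1, Matrix.add_mul, Matrix.one_mul,
      Matrix.mul_assoc Δ₁ Δ₂⁻¹ Δ₂, Matrix.nonsing_inv_mul _ hu2, Matrix.mul_one, add_comm]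
  have hdm : ((2:ℝ)⁻¹ • (Δ₁ + Δ₂)).det = Δ₁.det * M.det * Δ₂.det := by
    rw [← hmul, Matrix.det_mul, Matrix.det_mul]
  have hdmpos : (0:ℝ) < ((2:ℝ)⁻¹ • (Δ₁ + Δ₂)).det := by
    rw [hdm]; positivity
  -- the integral
  have hint : (∫ x : Fin k → ℝ, Real.sqrt (gaussDensity Δ₁ x * gaussDensity Δ₂ x))
      = C * ((2 * Real.pi) ^ ((k:ℝ)/2) * M.det ^ (-(1:ℝ)/2)) := by
    simp_rw [hpt]
    rw [MeasureTheory.integral_const_mul, gauss_int M hMpd]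
  have hIval : (∫ x : Fin k → ℝ, Real.sqrt (gaussDensity Δ₁ x * gaussDensity Δ₂ x))
      = Δ₁.det ^ ((1:ℝ)/4) * Δ₂.det ^ ((1:ℝ)/4)
        / (((2:ℝ)⁻¹ • (Δ₁ + Δ₂)).det) ^ ((1:ℝ)/2) := by
    rw [hint, hC]
    have hlhs : 0 < (2 * Real.pi) ^ (-(k:ℝ)/2) * Δ₁.det ^ (-(1:ℝ)/4) * Δ₂.det ^ (-(1:ℝ)/4)
        * ((2 * Real.pi) ^ ((k:ℝ)/2) * M.det ^ (-(1:ℝ)/2)) := by positivity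
    have hrhs : 0 < Δ₁.det ^ ((1:ℝ)/4) * Δ₂.det ^ ((1:ℝ)/4)
        / (((2:ℝ)⁻¹ • (Δ₁ + Δ₂)).det) ^ ((1:ℝ)/2) := by positivity
    apply Real.log_injOn_pos (Set.mem_Ioi.mpr hlhs) (Set.mem_Ioi.mpr hrhs)
    have hMdetlog : Real.log M.det
        = Real.log (((2:ℝ)⁻¹ • (Δ₁ + Δ₂)).det) - Real.log Δ₁.det - Real.log Δ₂.det := by
      rw [hdm, Real.log_mul (by positivity) hd2.ne', Real.log_mul hd1.ne' hMdet.ne']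
      ring
    rw [Real.log_mul (by positivity) (by positivity), Real.log_mul (by positivity) (by positivity),
      Real.log_mul (by positivity) (by positivity), Real.log_mul (by positivity) (by positivity),
      Real.log_div (by positivity) (by positivity),
      Real.log_rpow htp, Real.log_rpow hd1, Real.log_rpow hd2, Real.log_rpow htp,
      Real.log_rpow hMdet, Real.log_mul (by positivity) (by positivity),
      Real.log_mul (by positivity) (by positivity),
      Real.log_rpow hd1, Real.log_rpow hd2, Real.log_rpow hdmpos, hMdetlog]
    ring
  refine ⟨hIval, ?_⟩
  rw [hIval, Real.log_div (by positivity) (by positivity),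
    Real.log_mul (by positivity) (by positivity),
    Real.log_rpow hd1, Real.log_rpow hd2, Real.log_rpow hdmpos]
  ring
end

section
/- Let Δ₁ and Δ₂ be positive definite real k×k matrices, and for a positive definite Δ let f_Δ : ℝ^k → ℝ be the centered Gaussian density f_Δ(x) = (2π)^{-k/2} (det Δ)^{-1/2} exp(−xᵀ Δ⁻¹ x / 2). Let K = ∫ f_{Δ₁} log(f_{Δ₁}/f_{Δ₂}) denote the Kullback–Leibler divergence. Then the Kullback–Leibler variation satisfies ∫_{ℝ^k} f_{Δ₁}(x) ( log(f_{Δ₁}(x)/f_{Δ₂}(x)) − K )² dx = (1/2) tr( (I_k − Δ₂⁻¹ Δ₁)² ). -/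
open MeasureTheory Matrix

lemma int_pow_gauss (n : ℕ) : Integrable (fun x : ℝ => x ^ n * Real.exp (-x^2/2)) := by
  have h := integrable_rpow_mul_exp_neg_mul_sq (b := (1:ℝ)/2) (by norm_num) (s := (n:ℝ))
    (by have : (0:ℝ) ≤ n := Nat.cast_nonneg n; linarith)
  have he : ∀ x : ℝ, x ^ ((n:ℝ)) * Real.exp (-(1/2) * x^2) = x ^ n * Real.exp (-x^2/2) := by
    intro x; rw [Real.rpow_natCast]; ring_nf
  simpa only [he] using h

lemma gauss_moment_rec (m : ℕ) :
    ∫ x : ℝ, x ^ (m+2) * Real.exp (-x^2/2) = (m+1) * ∫ x : ℝ, x ^ m * Real.exp (-x^2/2) := by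
  have hu : ∀ x : ℝ, HasDerivAt (fun x : ℝ => x ^ (m+1)) (((m:ℝ)+1) * x ^ m) x := by
    intro x; simpa using hasDerivAt_pow (m+1) x
  have hv : ∀ x : ℝ, HasDerivAt (fun x : ℝ => -Real.exp (-x^2/2)) (x * Real.exp (-x^2/2)) x := by
    intro x
    have h1 : HasDerivAt (fun x : ℝ => -x^2/2) (-x) x := by
      have := ((hasDerivAt_pow 2 x).neg).div_const 2
      simpa using this.congr_deriv (by push_cast; ring)
    have := (h1.exp).neg
    exact (by simpa [mul_comm] using this : HasDerivAt (-fun x : ℝ => Real.exp (-x^2/2)) (x * Real.exp (-x^2/2)) x)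
  have key := integral_mul_deriv_eq_deriv_mul_of_integrable (fun x _ => hu x) (fun x _ => hv x) ?_ ?_ ?_
  · have e1 : ∀ x : ℝ, (fun x : ℝ => x ^ (m+1)) x * (x * Real.exp (-x^2/2)) = x^(m+2) * Real.exp (-x^2/2) := by
      intro x; ring
    have e2 : (∫ x : ℝ, ((m:ℝ)+1) * x ^ m * (-Real.exp (-x^2/2)))
        = -(((m:ℝ)+1) * ∫ x : ℝ, x ^ m * Real.exp (-x^2/2)) := by
      rw [← integral_const_mul, ← integral_neg]
      congr 1; funext x; ring
    simp only [e1] at key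
    rw [key, e2]; ring
  · apply (int_pow_gauss (m+2)).congr
    filter_upwards with x; simp [Pi.mul_apply]; ring
  · have := ((int_pow_gauss m).const_mul ((m:ℝ)+1)).neg
    apply this.congr
    filter_upwards with x; simp [Pi.mul_apply]; ring
  · have := ((int_pow_gauss (m+1))).neg
    apply this.congr
    filter_upwards with x; simp [Pi.mul_apply]

lemma gauss_m0 : ∫ x : ℝ, Real.exp (-x^2/2) = Real.sqrt (2 * Real.pi) := by
  have h := integral_gaussian (1/2)
  have he : ∀ x : ℝ, Real.exp (-(1/2) * x^2) = Real.exp (-x^2/2) := by intro x; ring_nf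
  simp only [he] at h
  rw [h]; norm_num [mul_comm]

noncomputable def psi (t : ℝ) : ℝ := (2 * Real.pi) ^ (-(1:ℝ)/2) * Real.exp (-t^2/2)

lemma two_pi_pos' : (0:ℝ) < 2 * Real.pi := by positivity

lemma const_sqrt : (2 * Real.pi) ^ (-(1:ℝ)/2) * Real.sqrt (2 * Real.pi) = 1 := by
  rw [Real.sqrt_eq_rpow, ← Real.rpow_add two_pi_pos']
  norm_num

lemma int_pow_psi (n : ℕ) : Integrable (fun t : ℝ => t ^ n * psi t) := by
  have := (int_pow_gauss n).const_mul ((2 * Real.pi) ^ (-(1:ℝ)/2))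
  apply this.congr
  filter_upwards with x; simp [psi]; ring

lemma psi_moment (n : ℕ) :
    ∫ t : ℝ, t ^ n * psi t
      = (2 * Real.pi) ^ (-(1:ℝ)/2) * ∫ x : ℝ, x ^ n * Real.exp (-x^2/2) := by
  rw [← integral_const_mul]
  congr 1; funext x; simp [psi]; ring

lemma psi_m0 : ∫ t : ℝ, psi t = 1 := by
  have h := psi_moment 0
  simp only [pow_zero, one_mul] at h
  rw [h, gauss_m0]; exact const_sqrt

lemma psi_m2 : ∫ t : ℝ, t ^ 2 * psi t = 1 := by
  have h := gauss_moment_rec 0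
  simp only [zero_add, Nat.cast_zero, pow_zero, one_mul] at h
  rw [psi_moment, h, gauss_m0]; exact const_sqrt

lemma psi_m4 : ∫ t : ℝ, t ^ 4 * psi t = 3 := by
  have h2 := gauss_moment_rec 0
  have h4 := gauss_moment_rec 2
  simp only [zero_add, Nat.cast_zero, pow_zero, one_mul] at h2
  norm_num at h4
  rw [psi_moment, h4, h2, gauss_m0]
  nlinarith [const_sqrt]

section Multi
variable {k : ℕ}

lemma prod_psi_moment (e : Fin k → ℕ) :
    ∫ z : Fin k → ℝ, (∏ i, (z i) ^ (e i)) * ∏ i, psi (z i)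
      = ∏ i, ∫ t : ℝ, t ^ (e i) * psi t := by
  rw [← integral_fintype_prod_eq_prod (fun i t => t ^ (e i) * psi t)]
  congr 1; funext z; rw [Finset.prod_mul_distrib]

lemma int_prod_psi (e : Fin k → ℕ) :
    Integrable (fun z : Fin k → ℝ => (∏ i, (z i) ^ (e i)) * ∏ i, psi (z i)) := by
  have := Integrable.fintype_prod (f := fun (i : Fin k) (t : ℝ) => t ^ (e i) * psi t)
    (fun i => int_pow_psi (e i))
  apply this.congr
  filter_upwards with z
  rw [Finset.prod_mul_distrib]

lemma prod_pow_single (z : Fin k → ℝ) (i : Fin k) (a : ℕ) :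
    (∏ t, (z t) ^ (if t = i then a else 0)) = (z i) ^ a := by
  rw [Finset.prod_eq_single i (fun b _ hb => by simp [hb]) (by simp)]
  simp

lemma prod_pow_pair (z : Fin k → ℝ) {i j : Fin k} (hij : i ≠ j) (a b : ℕ) :
    (∏ t, (z t) ^ (if t = i then a else if t = j then b else 0)) = (z i) ^ a * (z j) ^ b := by
  have h1 : (∏ t ∈ ({i, j} : Finset (Fin k)), (z t) ^ (if t = i then a else if t = j then b else 0))
      = (z i) ^ a * (z j) ^ b := by
    rw [Finset.prod_pair hij]
    simp [hij, Ne.symm hij]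
  rw [← h1]
  apply (Finset.prod_subset (Finset.subset_univ {i, j}) ?_).symm
  intro t _ ht
  simp only [Finset.mem_insert, Finset.mem_singleton, not_or] at ht
  simp [ht.1, ht.2]

lemma P_m0 : ∫ z : Fin k → ℝ, ∏ i, psi (z i) = 1 := by
  have h := prod_psi_moment (fun _ : Fin k => 0)
  simpa [psi_m0] using h

lemma P_sq (i : Fin k) : ∫ z : Fin k → ℝ, (z i) ^ 2 * ∏ t, psi (z t) = 1 := by
  have h := prod_psi_moment (fun t => if t = i then 2 else 0)
  simp only [prod_pow_single] at h
  rw [h, Finset.prod_eq_single i (fun b _ hb => by simp [hb, psi_m0]) (by simp)]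
  simp [psi_m2]

lemma P_4 (i : Fin k) : ∫ z : Fin k → ℝ, (z i) ^ 4 * ∏ t, psi (z t) = 3 := by
  have h := prod_psi_moment (fun t => if t = i then 4 else 0)
  simp only [prod_pow_single] at h
  rw [h, Finset.prod_eq_single i (fun b _ hb => by simp [hb, psi_m0]) (by simp)]
  simp [psi_m4]

lemma P_sq_sq {i j : Fin k} (hij : i ≠ j) :
    ∫ z : Fin k → ℝ, (z i) ^ 2 * (z j) ^ 2 * ∏ t, psi (z t) = 1 := by
  have h := prod_psi_moment (fun t => if t = i then 2 else if t = j then 2 else 0)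
  simp only [prod_pow_pair _ hij] at h
  rw [h]
  apply Finset.prod_eq_one
  intro t _
  by_cases h1 : t = i
  · simp [h1, hij, psi_m2]
  · by_cases h2 : t = j
    · simp [h1, h2, psi_m2]
    · simp [h1, h2, psi_m0]

lemma int_P : Integrable (fun z : Fin k → ℝ => ∏ t, psi (z t)) := by
  have := int_prod_psi (fun _ : Fin k => 0)
  simpa using this

lemma int_P_sq (i : Fin k) : Integrable (fun z : Fin k → ℝ => (z i) ^ 2 * ∏ t, psi (z t)) := by
  have := int_prod_psi (fun t => if t = i then 2 else 0)
  simpa [prod_pow_single] using this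

lemma int_P_4 (i : Fin k) : Integrable (fun z : Fin k → ℝ => (z i) ^ 4 * ∏ t, psi (z t)) := by
  have := int_prod_psi (fun t => if t = i then 4 else 0)
  simpa [prod_pow_single] using this

lemma int_P_sq_sq {i j : Fin k} (hij : i ≠ j) :
    Integrable (fun z : Fin k → ℝ => (z i) ^ 2 * (z j) ^ 2 * ∏ t, psi (z t)) := by
  have := int_prod_psi (fun t => if t = i then 2 else if t = j then 2 else 0)
  simpa only [prod_pow_pair _ hij] using this

lemma int_P_h (i j : Fin k) :
    Integrable (fun z : Fin k → ℝ =>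
      ((z i) ^ 2 - 1) * ((z j) ^ 2 - 1) * ∏ t, psi (z t)) := by
  by_cases hij : i = j
  · subst hij
    have := ((int_P_4 i).sub ((int_P_sq i).const_mul 2)).add int_P
    apply this.congr
    filter_upwards with z
    simp only [Pi.add_apply, Pi.sub_apply]
    ring
  · have := (((int_P_sq_sq hij).sub (int_P_sq i)).sub (int_P_sq j)).add int_P
    apply this.congr
    filter_upwards with z
    simp only [Pi.add_apply, Pi.sub_apply]
    ring

lemma P_h (i j : Fin k) :
    ∫ z : Fin k → ℝ, ((z i) ^ 2 - 1) * ((z j) ^ 2 - 1) * ∏ t, psi (z t)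
      = if i = j then 2 else 0 := by
  by_cases hij : i = j
  · subst hij
    simp only [if_pos rfl]
    have e : ∀ z : Fin k → ℝ, ((z i) ^ 2 - 1) * ((z i) ^ 2 - 1) * ∏ t, psi (z t)
        = ((z i) ^ 4 * ∏ t, psi (z t)) - 2 * ((z i) ^ 2 * ∏ t, psi (z t)) + ∏ t, psi (z t) := by
      intro z; ring
    simp only [e]
    have hXY : Integrable (fun z : Fin k → ℝ =>
        (z i) ^ 4 * ∏ t, psi (z t) - 2 * ((z i) ^ 2 * ∏ t, psi (z t))) :=
      (int_P_4 i).sub ((int_P_sq i).const_mul 2)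
    rw [integral_add hXY int_P, integral_sub (int_P_4 i) ((int_P_sq i).const_mul 2),
      integral_const_mul, P_4, P_sq, P_m0]
    norm_num
  · simp only [if_neg hij]
    have e : ∀ z : Fin k → ℝ, ((z i) ^ 2 - 1) * ((z j) ^ 2 - 1) * ∏ t, psi (z t)
        = ((z i) ^ 2 * (z j) ^ 2 * ∏ t, psi (z t)) - ((z i) ^ 2 * ∏ t, psi (z t))
          - ((z j) ^ 2 * ∏ t, psi (z t)) + ∏ t, psi (z t) := by
      intro z; ring
    simp only [e]
    have h1 : Integrable (fun z : Fin k → ℝ =>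
        (z i) ^ 2 * (z j) ^ 2 * ∏ t, psi (z t) - (z i) ^ 2 * ∏ t, psi (z t)) :=
      (int_P_sq_sq hij).sub (int_P_sq i)
    have h2 : Integrable (fun z : Fin k → ℝ =>
        ((z i) ^ 2 * (z j) ^ 2 * ∏ t, psi (z t) - (z i) ^ 2 * ∏ t, psi (z t))
          - (z j) ^ 2 * ∏ t, psi (z t)) :=
      h1.sub (int_P_sq j)
    rw [integral_add h2 int_P, integral_sub h1 (int_P_sq j),
      integral_sub (int_P_sq_sq hij) (int_P_sq i),
      P_sq_sq hij, P_sq, P_sq, P_m0]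
    norm_num

end Multi


variable {k : ℕ}

open scoped MatrixOrder

lemma matrix_decomp {Δ : Matrix (Fin k) (Fin k) ℝ} (h1 : Δ.PosDef)
    (M : Matrix (Fin k) (Fin k) ℝ) (hM : M.IsHermitian) :
    ∃ (A : Matrix (Fin k) (Fin k) ℝ) (d : Fin k → ℝ),
      A * Aᵀ = Δ ∧ Aᵀ * Δ⁻¹ * A = 1 ∧ Aᵀ * M * A = Matrix.diagonal d := by
  classical
  set S := CFC.sqrt Δ with hSdef
  have hSS : S * S = Δ := CFC.sqrt_mul_sqrt_self Δ h1.posSemidef.nonneg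
  have hSherm : S.IsHermitian := (CFC.sqrt_nonneg Δ).posSemidef.1
  have hST : Sᵀ = S := by
    have := hSherm
    rwa [Matrix.IsHermitian, conjTranspose_eq_transpose_of_trivial] at this
  have hdetS : S.det ≠ 0 := by
    intro h
    have : Δ.det = 0 := by rw [← hSS, det_mul, h, zero_mul]
    exact h1.det_pos.ne' this
  set N := S * M * S with hNdef
  have hNherm : N.IsHermitian := by
    have hMh : Mᴴ = M := hM
    have hSh : Sᴴ = S := hSherm
    simp only [Matrix.IsHermitian, hNdef, conjTranspose_mul, hMh, hSh]
    rw [Matrix.mul_assoc]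
  set U := (hNherm.eigenvectorUnitary : Matrix (Fin k) (Fin k) ℝ) with hUdef
  have hUunit : star U * U = 1 ∧ U * star U = 1 := by
    constructor
    · exact (Matrix.mem_unitaryGroup_iff'.mp hNherm.eigenvectorUnitary.2)
    · exact (Matrix.mem_unitaryGroup_iff.mp hNherm.eigenvectorUnitary.2)
  have hUT : star U = Uᵀ := by
    rw [Matrix.star_eq_conjTranspose, conjTranspose_eq_transpose_of_trivial]
  refine ⟨S * U, hNherm.eigenvalues, ?_, ?_, ?_⟩
  · rw [Matrix.transpose_mul, hST, ← hUT]
    calc S * U * (star U * S) = S * (U * star U) * S := by simp only [Matrix.mul_assoc]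
    _ = Δ := by rw [hUunit.2, Matrix.mul_one, hSS]
  · have hDinv : Δ⁻¹ = S⁻¹ * S⁻¹ := by rw [← hSS, Matrix.mul_inv_rev]
    rw [Matrix.transpose_mul, hST, ← hUT, hDinv]
    calc star U * S * (S⁻¹ * S⁻¹) * (S * U)
        = star U * ((S * S⁻¹) * (S⁻¹ * S)) * U := by simp only [Matrix.mul_assoc]
      _ = 1 := by
          rw [Matrix.mul_nonsing_inv _ hdetS.isUnit, Matrix.nonsing_inv_mul _ hdetS.isUnit]
          simpa using hUunit.1
  · rw [Matrix.transpose_mul, hST, ← hUT]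
    have key := hNherm.conjStarAlgAut_star_eigenvectorUnitary
    rw [Unitary.conjStarAlgAut_star_apply] at key
    calc star U * S * M * (S * U) = star U * (S * M * S) * U := by simp only [Matrix.mul_assoc]
      _ = Matrix.diagonal (RCLike.ofReal ∘ hNherm.eigenvalues) := by
          rw [← hNdef]; simpa only [Matrix.mul_assoc] using key
      _ = Matrix.diagonal hNherm.eigenvalues := by
          congr 1

lemma cov (A : Matrix (Fin k) (Fin k) ℝ) (hA : A.det ≠ 0)
    (F : (Fin k → ℝ) → ℝ) (hF : AEStronglyMeasurable F (volume : Measure (Fin k → ℝ))) :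
    ∫ x, F x = |A.det| * ∫ z, F (A.mulVec z) := by
  have hmap := Real.map_matrix_volume_pi_eq_smul_volume_pi hA
  have hmeas : Measurable (Matrix.toLin' A) :=
    (LinearMap.continuous_on_pi _).measurable
  have h1 : ∫ z, F (A.mulVec z) = ∫ z, F (Matrix.toLin' A z) := by
    simp only [Matrix.toLin'_apply]
  have hF' : AEStronglyMeasurable F (Measure.map (Matrix.toLin' A) volume) := by
    rw [hmap]
    exact hF.mono_ac (Measure.absolutelyContinuous_of_le_smul le_rfl)
  rw [h1, ← integral_map hmeas.aemeasurable hF', hmap, integral_smul_measure,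
    ENNReal.toReal_ofReal (by positivity), smul_eq_mul, abs_inv, ← mul_assoc,
    mul_inv_cancel₀ (by simpa using hA), one_mul]

lemma quad_transform (A B : Matrix (Fin k) (Fin k) ℝ) (z : Fin k → ℝ) :
    dotProduct (A.mulVec z) (B.mulVec (A.mulVec z))
      = dotProduct z ((Aᵀ * B * A).mulVec z) := by
  rw [Matrix.mulVec_mulVec, Matrix.dotProduct_mulVec z, Matrix.mul_assoc,
    ← Matrix.vecMul_vecMul, Matrix.vecMul_transpose, ← Matrix.dotProduct_mulVec]

lemma quad_one (z : Fin k → ℝ) :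
    dotProduct z ((1 : Matrix (Fin k) (Fin k) ℝ).mulVec z) = ∑ i, (z i) ^ 2 := by
  rw [Matrix.one_mulVec]
  simp [dotProduct, sq]

lemma quad_diagonal (d : Fin k → ℝ) (z : Fin k → ℝ) :
    dotProduct z ((Matrix.diagonal d).mulVec z) = ∑ i, d i * (z i) ^ 2 := by
  simp only [dotProduct, Matrix.mulVec_diagonal]
  exact Finset.sum_congr rfl fun i _ => by ring

lemma continuous_quad (B : Matrix (Fin k) (Fin k) ℝ) :
    Continuous fun x : Fin k → ℝ => dotProduct x (B.mulVec x) := by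
  simp only [dotProduct, Matrix.mulVec]
  apply continuous_finset_sum
  intro i _
  exact (continuous_apply i).mul
    (continuous_finset_sum _ fun j _ => continuous_const.mul (continuous_apply j))

lemma continuous_gaussDensity (Δ : Matrix (Fin k) (Fin k) ℝ) :
    Continuous (gaussDensity Δ) := by
  unfold gaussDensity
  exact continuous_const.mul (((continuous_quad Δ⁻¹).neg.div_const 2).rexp)

/-- Kullback–Leibler variation between two centered Gaussians: with
`K = ∫ f_{Δ₁} log(f_{Δ₁}/f_{Δ₂})` the Kullback–Leibler divergence, one has
`∫ f_{Δ₁} (log(f_{Δ₁}/f_{Δ₂}) − K)² = (1/2) tr((I − Δ₂⁻¹ Δ₁)²)`. -/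
theorem stmt17 (k : ℕ) (Δ₁ Δ₂ : Matrix (Fin k) (Fin k) ℝ)
    (h1 : Δ₁.PosDef) (h2 : Δ₂.PosDef) (K : ℝ)
    (hK : K = ∫ x : Fin k → ℝ,
        gaussDensity Δ₁ x * Real.log (gaussDensity Δ₁ x / gaussDensity Δ₂ x)) :
    (∫ x : Fin k → ℝ,
        gaussDensity Δ₁ x * (Real.log (gaussDensity Δ₁ x / gaussDensity Δ₂ x) - K) ^ 2) =
      (1 / 2) * (((1 : Matrix (Fin k) (Fin k) ℝ) - Δ₂⁻¹ * Δ₁) ^ 2).trace := by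
  classical
  have hd1 : (0:ℝ) < Δ₁.det := h1.det_pos
  have hd2 : (0:ℝ) < Δ₂.det := h2.det_pos
  set M : Matrix (Fin k) (Fin k) ℝ := Δ₂⁻¹ - Δ₁⁻¹ with hMdef
  set c : ℝ := (-(1:ℝ)/2) * Real.log Δ₁.det - (-(1:ℝ)/2) * Real.log Δ₂.det with hcdef
  have hposC : (0:ℝ) < (2 * Real.pi) ^ (-(k:ℝ)/2) := Real.rpow_pos_of_pos two_pi_pos' _
  -- pointwise log identity
  have hlog : ∀ x, Real.log (gaussDensity Δ₁ x / gaussDensity Δ₂ x)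
      = c + dotProduct x (M.mulVec x) / 2 := by
    intro x
    unfold gaussDensity
    rw [Real.log_div
        (mul_pos (mul_pos hposC (Real.rpow_pos_of_pos hd1 _)) (Real.exp_pos _)).ne'
        (mul_pos (mul_pos hposC (Real.rpow_pos_of_pos hd2 _)) (Real.exp_pos _)).ne',
      Real.log_mul (mul_pos hposC (Real.rpow_pos_of_pos hd1 _)).ne' (Real.exp_pos _).ne',
      Real.log_mul (mul_pos hposC (Real.rpow_pos_of_pos hd2 _)).ne' (Real.exp_pos _).ne',
      Real.log_mul hposC.ne' (Real.rpow_pos_of_pos hd1 _).ne',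
      Real.log_mul hposC.ne' (Real.rpow_pos_of_pos hd2 _).ne',
      Real.log_exp, Real.log_exp, Real.log_rpow hd1, Real.log_rpow hd2,
      hMdef, Matrix.sub_mulVec, dotProduct_sub, hcdef]
    ring
  -- hermitian M
  have hM : M.IsHermitian := (h2.posSemidef.inv.1).sub (h1.posSemidef.inv.1)
  obtain ⟨A, d, hAAT, hAIA, hAMA⟩ := matrix_decomp h1 M hM
  have hdetsq : A.det * A.det = Δ₁.det := by
    rw [← hAAT, Matrix.det_mul, Matrix.det_transpose]
  have hdetA : A.det ≠ 0 := by
    intro h; rw [h, mul_zero] at hdetsq; exact hd1.ne' hdetsq.symm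
  have habs : |A.det| = Real.sqrt Δ₁.det := by
    rw [← hdetsq, ← pow_two, Real.sqrt_sq_eq_abs]
  -- density transform
  have hgA : ∀ z : Fin k → ℝ, |A.det| * gaussDensity Δ₁ (A.mulVec z) = ∏ i, psi (z i) := by
    intro z
    unfold gaussDensity
    rw [quad_transform, hAIA, quad_one, habs]
    have h2' : Real.sqrt Δ₁.det * Δ₁.det ^ (-(1:ℝ)/2) = 1 := by
      rw [Real.sqrt_eq_rpow, ← Real.rpow_add hd1]; norm_num
    have h3 : ((2 * Real.pi) ^ (-(k:ℝ)/2) : ℝ) = ∏ _i : Fin k, (2*Real.pi) ^ (-(1:ℝ)/2) := by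
      rw [Finset.prod_const, ← Real.rpow_natCast ((2*Real.pi) ^ (-(1:ℝ)/2)),
        ← Real.rpow_mul (le_of_lt two_pi_pos')]
      simp; ring_nf
    have h4 : Real.exp (-(∑ i, (z i)^2)/2) = ∏ i, Real.exp (-(z i)^2/2) := by
      rw [← Real.exp_sum]; congr 1
      rw [← Finset.sum_div, ← Finset.sum_neg_distrib]
    rw [h3, h4]
    simp only [psi, Finset.prod_mul_distrib]
    linear_combination ((∏ _i : Fin k, (2*Real.pi) ^ (-(1:ℝ)/2)) * ∏ i, Real.exp (-(z i)^2/2)) * h2'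
  -- value of K
  have hKval : K = c + (∑ i, d i)/2 := by
    rw [hK]
    simp only [hlog]
    rw [cov A hdetA (fun x => gaussDensity Δ₁ x * (c + x ⬝ᵥ M *ᵥ x / 2)) ((continuous_gaussDensity Δ₁).mul
      (continuous_const.add ((continuous_quad M).div_const 2))).aestronglyMeasurable,
      ← integral_const_mul]
    have e2 : ∀ z : Fin k → ℝ,
        |A.det| * (gaussDensity Δ₁ (A.mulVec z)
          * (c + dotProduct (A.mulVec z) (M.mulVec (A.mulVec z))/2))
        = c * (∏ t, psi (z t)) + ∑ i, (d i/2) * ((z i)^2 * ∏ t, psi (z t)) := by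
      intro z
      rw [← mul_assoc, hgA z, quad_transform, hAMA, quad_diagonal]
      rw [mul_add, mul_comm (∏ t, psi (z t)) c, Finset.sum_div, Finset.mul_sum]
      congr 1
      exact Finset.sum_congr rfl fun i _ => by ring
    simp only [e2]
    rw [integral_add (int_P.const_mul c)
        (integrable_finset_sum _ fun i _ => (int_P_sq i).const_mul _),
      integral_const_mul, P_m0,
      integral_finset_sum _ (fun i _ => (int_P_sq i).const_mul _)]
    simp only [integral_const_mul, P_sq, mul_one, Finset.sum_div]
  -- main computation
  simp only [hlog, hKval]
  rw [cov A hdetA (fun x => gaussDensity Δ₁ x * (c + x ⬝ᵥ M *ᵥ x / 2 - (c + (∑ i, d i) / 2)) ^ 2) ((continuous_gaussDensity Δ₁).mul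
      (((continuous_const.add ((continuous_quad M).div_const 2)).sub continuous_const).pow 2)).aestronglyMeasurable,
    ← integral_const_mul]
  have e3 : ∀ z : Fin k → ℝ,
      |A.det| * (gaussDensity Δ₁ (A.mulVec z)
        * ((c + dotProduct (A.mulVec z) (M.mulVec (A.mulVec z))/2 - (c + (∑ i, d i)/2))^2))
      = ∑ i, ∑ j, (d i * d j / 4) * (((z i)^2-1)*((z j)^2-1) * ∏ t, psi (z t)) := by
    intro z
    rw [← mul_assoc, hgA z, quad_transform, hAMA, quad_diagonal]
    have hsum : (∑ i, d i * (z i)^2) - (∑ i, d i) = ∑ i, d i * ((z i)^2 - 1) := by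
      rw [← Finset.sum_sub_distrib]
      exact Finset.sum_congr rfl fun i _ => by ring
    have expand : (c + (∑ i, d i * (z i)^2)/2 - (c + (∑ i, d i)/2))^2
        = (∑ i, d i * ((z i)^2 - 1))^2 / 4 := by
      rw [show c + (∑ i, d i * (z i)^2)/2 - (c + (∑ i, d i)/2)
          = ((∑ i, d i * (z i)^2) - (∑ i, d i))/2 by ring, hsum, div_pow]
      norm_num
    rw [expand, sq, Finset.sum_mul_sum]
    rw [Finset.sum_div, Finset.mul_sum]
    refine Finset.sum_congr rfl fun i _ => ?_
    rw [Finset.sum_div, Finset.mul_sum]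
    refine Finset.sum_congr rfl fun j _ => ?_
    ring
  simp only [e3]
  rw [integral_finset_sum _ (fun i _ => integrable_finset_sum _ fun j _ => (int_P_h i j).const_mul _)]
  have e4 : ∀ i : Fin k, (∫ z : Fin k → ℝ, ∑ j, (d i * d j / 4) * (((z i)^2-1)*((z j)^2-1) * ∏ t, psi (z t)))
      = d i * d i / 2 := by
    intro i
    rw [integral_finset_sum _ (fun j _ => (int_P_h i j).const_mul _)]
    simp only [integral_const_mul, P_h]
    simp only [mul_ite, mul_zero, Finset.sum_ite_eq, Finset.mem_univ, if_true]
    ring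
  simp only [e4]
  -- trace identity
  have hMd1 : M * Δ₁ = Δ₂⁻¹ * Δ₁ - 1 := by
    rw [hMdef, Matrix.sub_mul, Matrix.nonsing_inv_mul _ (isUnit_iff_ne_zero.mpr hd1.ne')]
  have hsq : ((1 : Matrix (Fin k) (Fin k) ℝ) - Δ₂⁻¹*Δ₁)^2 = (M*Δ₁)*(M*Δ₁) := by
    rw [show (1 : Matrix (Fin k) (Fin k) ℝ) - Δ₂⁻¹*Δ₁ = -(M*Δ₁) by rw [hMd1, neg_sub], neg_sq, pow_two]
  have hdd : (Matrix.diagonal d) * (Matrix.diagonal d) = Aᵀ * (M * Δ₁ * M) * A := by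
    rw [← hAMA, ← hAAT]
    simp only [Matrix.mul_assoc]
  have htr : (((1 : Matrix (Fin k) (Fin k) ℝ) - Δ₂⁻¹ * Δ₁) ^ 2).trace = ∑ i, d i * d i := by
    rw [hsq]
    calc (M*Δ₁*(M*Δ₁)).trace
        = (Aᵀ * (M * Δ₁ * M) * A).trace := by
          rw [Matrix.trace_mul_cycle Aᵀ (M * Δ₁ * M) A, hAAT,
            Matrix.trace_mul_comm Δ₁ (M * Δ₁ * M)]
          congr 1
          simp only [Matrix.mul_assoc]
      _ = ∑ i, d i * d i := by
          rw [← hdd, Matrix.diagonal_mul_diagonal, Matrix.trace_diagonal]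
  rw [htr, Finset.mul_sum]
  exact Finset.sum_congr rfl fun i _ => by ring
end
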